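/- Let 1<p<2 and ℓ≥2. For all ξ, η ∈ ℂ^ℓ with |ξ|+|ξ−η|>0 one has C_p(ξ,η) ≤ c₃(p)·|η|²/(|ξ|+|ξ−η|)^{2−p}, where c₃(p) := sup over (s,t)∈ℝ² with s²+t²>0 of ((t² + s² + 2s + 1)^{p/2} − 1 − ps)/((√(t² + s² + 2s + 1) + 1)^{p−2}(t² + s²)). Moreover c₃(p) ∈ [p/2^{p−1}, +∞). -/

import Mathlib

open Real Complex Filter Topology

set_option maxHeartbeats 1000000

noncomputable section

/-- The `C_p`-functional on `ℂ^ℓ`: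
`C_p(ξ,η) = |ξ|^p − |ξ−η|^p − p|ξ−η|^{p−2} Re⟨ξ−η, η⟩`.
(When `ξ = η` the last term vanishes automatically since `Re⟨0,η⟩ = 0`.) -/
def Cp (p : ℝ) {ℓ : ℕ} (ξ η : EuclideanSpace ℂ (Fin ℓ)) : ℝ :=
  ‖ξ‖ ^ p - ‖ξ - η‖ ^ p - p * ‖ξ - η‖ ^ (p - 2) * (inner ℂ (ξ - η) η : ℂ).re

end

/-- The constant `c₃(p)`, as a supremum over `(s,t) ∈ ℝ²` with `s² + t² > 0`. -/
noncomputable def c3 (p : ℝ) : ℝ :=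
  sSup {r : ℝ | ∃ s t : ℝ, 0 < s ^ 2 + t ^ 2 ∧
    r = ((t ^ 2 + s ^ 2 + 2 * s + 1) ^ (p / 2) - 1 - p * s) /
      ((Real.sqrt (t ^ 2 + s ^ 2 + 2 * s + 1) + 1) ^ (p - 2) * (t ^ 2 + s ^ 2))}

lemma coreAlg (p s t A B E C h H AP : ℝ)
    (hp1 : 1 < p) (hp2 : p < 2)
    (hA0 : 0 ≤ A) (hA2 : A ^ 2 = t ^ 2 + s ^ 2 + 2 * s + 1)
    (hH : H = t ^ 2 + s ^ 2) (hh0 : 0 ≤ h) (hh2 : h ^ 2 = t ^ 2 + s ^ 2)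
    (hCE : C * E = 1) (hC0 : 0 < C) (hE1 : 1 ≤ E) (hEle : E ≤ A + 1)
    (hconv : AP - 1 ≤ p * B * (A - 1))
    (hBsign : (1 ≤ A ∧ 1 ≤ B ∧ B ≤ A) ∨ (A ≤ 1 ∧ B ≤ 1 ∧ A ≤ B))
    (hBE : B * E ≤ A + 1) :
    AP - 1 - p * s ≤ 32 * (C * H) := by
  have hp0 : 0 < p := lt_trans zero_lt_one hp1
  have hH0 : 0 ≤ H := by rw [hH]; positivity
  have hE0 : 0 < E := by linarith
  have hsh : s ≤ h := by nlinarith [sq_nonneg t]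
  have hsh' : -h ≤ s := by nlinarith [sq_nonneg t]
  have hAh : A ≤ 1 + h := by nlinarith [hsh, hh0, hA0]
  have hAh' : 1 - h ≤ A := by nlinarith [hsh', hh0, hA0]
  have hAs : 1 + s ≤ A := by
    rcases le_or_gt (1 + s) 0 with h1 | h1
    · linarith
    · nlinarith [sq_nonneg t]
  have hBA1 : 0 ≤ (B - 1) * (A - 1) := by
    rcases hBsign with ⟨h1, h2, h3⟩ | ⟨h1, h2, h3⟩
    · exact mul_nonneg (by linarith) (by linarith)
    · have := mul_nonneg (neg_nonneg.2 (by linarith : B - 1 ≤ 0))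
        (neg_nonneg.2 (by linarith : A - 1 ≤ 0))
      rwa [neg_mul_neg] at this
  have hAle : (A - 1) ^ 2 ≤ H := by
    have e : (1 + h - A) * (h + A - 1) = h ^ 2 - (A - 1) ^ 2 := by ring
    have hn := mul_nonneg (by linarith : (0:ℝ) ≤ 1 + h - A) (by linarith : (0:ℝ) ≤ h + A - 1)
    rw [e] at hn
    linarith
  -- T1
  have hT1 : (B - 1) * (A - 1) * E ≤ 3 * H := by
    rcases le_or_gt A 2 with h2 | h2
    · have hfacA : (B - 1) * (A - 1) ≤ H := by
        have hsq : (A - 1) * (A - 1) = (A - 1) ^ 2 := by ring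
        rcases hBsign with ⟨h1', h2', h3'⟩ | ⟨h1', h2', h3'⟩
        · have := mul_le_mul_of_nonneg_right (show B - 1 ≤ A - 1 by linarith)
            (show (0:ℝ) ≤ A - 1 by linarith)
          linarith
        · have := mul_le_mul_of_nonpos_right (show A - 1 ≤ B - 1 by linarith)
            (show A - 1 ≤ 0 by linarith)
          linarith
      have hE3 : E ≤ 3 := by linarith
      have := mul_le_mul hfacA hE3 hE0.le hH0
      linarith
    · have e1 : B * (A - 1) * E - (B - 1) * (A - 1) * E = (A - 1) * E := by ring
      have hpos := mul_nonneg (show (0:ℝ) ≤ A - 1 by linarith) hE0.le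
      have hBEA : B * (A - 1) * E ≤ (A + 1) * (A - 1) := by
        have := mul_le_mul_of_nonneg_right hBE (show (0:ℝ) ≤ A - 1 by linarith)
        have e2 : B * (A - 1) * E = B * E * (A - 1) := by ring
        linarith [e2 ▸ this]
      have h31 : (A + 1) * (A - 1) ≤ 3 * (A - 1) ^ 2 := by nlinarith
      linarith
  -- T2
  have hT2 : (A - 1 - s) * E ≤ 10 * H := by
    rcases le_or_gt (-(1:ℝ)/2) s with h1 | h1
    · have hid : (A - 1 - s) * (A + 1 + s) = t ^ 2 := by linear_combination hA2
      have hE2 : E ≤ 2 * (A + 1 + s) := by linarith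
      have hstep := mul_le_mul_of_nonneg_left hE2 (by linarith : (0:ℝ) ≤ A - 1 - s)
      have e : (A - 1 - s) * (2 * (A + 1 + s)) = 2 * ((A - 1 - s) * (A + 1 + s)) := by ring
      have ht2 : t ^ 2 ≤ H := by nlinarith [sq_nonneg s]
      linarith [e ▸ hstep, hid]
    · have hh12 : 1 / 2 ≤ h := by nlinarith [sq_nonneg t, sq_nonneg (s + 1/2)]
      have hb1 : A - 1 - s ≤ 2 * h := by linarith
      have hb2 : E ≤ 5 * h := by linarith
      have := mul_le_mul hb1 hb2 hE0.le (by linarith : (0:ℝ) ≤ 2 * h)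
      have e : 2 * h * (5 * h) = 10 * h ^ 2 := by ring
      linarith
  -- assembly
  have hGN : AP - 1 - p * s ≤ p * ((B - 1) * (A - 1) + (A - 1 - s)) := by nlinarith
  have hG0 : 0 ≤ (B - 1) * (A - 1) + (A - 1 - s) := by linarith
  have hGE : ((B - 1) * (A - 1) + (A - 1 - s)) * E ≤ 13 * H := by
    have e : ((B - 1) * (A - 1) + (A - 1 - s)) * E
        = (B - 1) * (A - 1) * E + (A - 1 - s) * E := by ring
    linarith
  have hG13 : (B - 1) * (A - 1) + (A - 1 - s) ≤ 13 * H * C := by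
    calc (B - 1) * (A - 1) + (A - 1 - s)
        = ((B - 1) * (A - 1) + (A - 1 - s)) * E * C := by
          rw [mul_assoc, mul_comm E C, hCE, mul_one]
      _ ≤ 13 * H * C := mul_le_mul_of_nonneg_right hGE hC0.le
  have h13 : (0:ℝ) ≤ 13 * H * C := by positivity
  have h1 := mul_le_mul_of_nonneg_left hG13 hp0.le
  have h2 := mul_le_mul_of_nonneg_right hp2.le h13
  linarith

lemma keyIneq (p s t : ℝ) (hp1 : 1 < p) (hp2 : p < 2) :
    (t ^ 2 + s ^ 2 + 2 * s + 1) ^ (p / 2) - 1 - p * s ≤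
      32 * ((Real.sqrt (t ^ 2 + s ^ 2 + 2 * s + 1) + 1) ^ (p - 2) * (t ^ 2 + s ^ 2)) := by
  have hx : (0:ℝ) ≤ t ^ 2 + s ^ 2 + 2 * s + 1 := by nlinarith [sq_nonneg (s + 1), sq_nonneg t]
  set A := Real.sqrt (t ^ 2 + s ^ 2 + 2 * s + 1) with hAdef
  have hA0 : 0 ≤ A := Real.sqrt_nonneg _
  have hA2 : A ^ 2 = t ^ 2 + s ^ 2 + 2 * s + 1 := Real.sq_sqrt hx
  have hxp : (t ^ 2 + s ^ 2 + 2 * s + 1) ^ (p / 2) = A ^ p := Real.rpow_div_two_eq_sqrt p hx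
  have hA1 : (0:ℝ) < A + 1 := by linarith
  have hCE : (A + 1) ^ (p - 2) * (A + 1) ^ (2 - p) = 1 := by
    rw [← Real.rpow_add hA1]; norm_num
  have hC0 : (0:ℝ) < (A + 1) ^ (p - 2) := Real.rpow_pos_of_pos hA1 _
  have hE1 : (1:ℝ) ≤ (A + 1) ^ (2 - p) := Real.one_le_rpow (by linarith) (by linarith)
  have hEle : (A + 1) ^ (2 - p) ≤ A + 1 := by
    calc (A + 1) ^ (2 - p) ≤ (A + 1) ^ (1:ℝ) :=
          Real.rpow_le_rpow_of_exponent_le (by linarith) (by linarith)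
      _ = A + 1 := Real.rpow_one _
  rw [hxp]
  rcases eq_or_lt_of_le hA0 with hA | hA
  · -- A = 0 : then s = -1, t = 0
    have hx0 : t ^ 2 + s ^ 2 + 2 * s + 1 = 0 := by rw [← hA2, ← hA]; ring
    have hs : s = -1 := by nlinarith [sq_nonneg (s + 1), sq_nonneg t]
    have ht : t = 0 := by nlinarith [sq_nonneg (s + 1), sq_nonneg t]
    have hzp : (0:ℝ) ^ p = 0 := Real.zero_rpow (by linarith)
    rw [← hA, hzp, hs, ht]
    norm_num [Real.one_rpow]
    linarith
  · -- main case A > 0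
    have hApos : 0 < A ^ p := Real.rpow_pos_of_pos hA _
    have hconv : A ^ p - 1 ≤ p * A ^ (p - 1) * (A - 1) := by
      have hber := one_add_mul_self_le_rpow_one_add (s := 1 / A - 1) (by linarith [one_div_pos.mpr hA]) hp1.le
      rw [show (1:ℝ) + (1 / A - 1) = 1 / A by ring] at hber
      have h1A : (1 / A) ^ p = 1 / A ^ p := by
        rw [Real.div_rpow (by norm_num) hA0, Real.one_rpow]
      have hBA : A ^ p = A ^ (p - 1) * A := by
        rw [← Real.rpow_add_one (ne_of_gt hA) (p - 1)]; norm_num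
      rw [h1A] at hber
      have hmul := mul_le_mul_of_nonneg_left hber hApos.le
      rw [mul_one_div, div_self (ne_of_gt hApos)] at hmul
      have hexp : A ^ p * (1 + p * (1 / A - 1)) = A ^ p + p * A ^ (p - 1) * (1 - A) := by
        rw [hBA]; field_simp
      rw [hexp] at hmul
      linarith
    have hBsign : (1 ≤ A ∧ 1 ≤ A ^ (p - 1) ∧ A ^ (p - 1) ≤ A) ∨
        (A ≤ 1 ∧ A ^ (p - 1) ≤ 1 ∧ A ≤ A ^ (p - 1)) := by
      rcases le_or_gt 1 A with h1 | h1
      · left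
        refine ⟨h1, Real.one_le_rpow h1 (by linarith), ?_⟩
        calc A ^ (p - 1) ≤ A ^ (1:ℝ) := Real.rpow_le_rpow_of_exponent_le h1 (by linarith)
          _ = A := Real.rpow_one _
      · right
        refine ⟨h1.le, Real.rpow_le_one hA0 h1.le (by linarith), ?_⟩
        calc A = A ^ (1:ℝ) := (Real.rpow_one _).symm
          _ ≤ A ^ (p - 1) := Real.rpow_le_rpow_of_exponent_ge hA h1.le (by linarith)
    have hBE : A ^ (p - 1) * (A + 1) ^ (2 - p) ≤ A + 1 := by
      have h1 : A ^ (p - 1) ≤ (A + 1) ^ (p - 1) :=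
        Real.rpow_le_rpow hA0 (by linarith) (by linarith)
      have h2' : (A + 1) ^ (p - 1) * (A + 1) ^ (2 - p) = A + 1 := by
        rw [← Real.rpow_add hA1, show p - 1 + (2 - p) = 1 by ring, Real.rpow_one]
      have h3' : (0:ℝ) < (A + 1) ^ (2 - p) := Real.rpow_pos_of_pos hA1 _
      nlinarith
    exact coreAlg p s t A (A ^ (p - 1)) ((A + 1) ^ (2 - p)) ((A + 1) ^ (p - 2))
      (Real.sqrt (t ^ 2 + s ^ 2)) (t ^ 2 + s ^ 2) (A ^ p) hp1 hp2 hA0 hA2 rfl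
      (Real.sqrt_nonneg _) (Real.sq_sqrt (by positivity)) hCE hC0 hE1 hEle hconv hBsign hBE

lemma denom_pos (p s t : ℝ) (h : 0 < s ^ 2 + t ^ 2) :
    0 < (Real.sqrt (t ^ 2 + s ^ 2 + 2 * s + 1) + 1) ^ (p - 2) * (t ^ 2 + s ^ 2) := by
  have h1 : 0 < Real.sqrt (t ^ 2 + s ^ 2 + 2 * s + 1) + 1 := by
    have := Real.sqrt_nonneg (t ^ 2 + s ^ 2 + 2 * s + 1); linarith
  have h2 : (0:ℝ) < t ^ 2 + s ^ 2 := by linarith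
  exact mul_pos (Real.rpow_pos_of_pos h1 _) h2

lemma c3_bdd (p : ℝ) (hp1 : 1 < p) (hp2 : p < 2) :
    BddAbove {r : ℝ | ∃ s t : ℝ, 0 < s ^ 2 + t ^ 2 ∧
      r = ((t ^ 2 + s ^ 2 + 2 * s + 1) ^ (p / 2) - 1 - p * s) /
        ((Real.sqrt (t ^ 2 + s ^ 2 + 2 * s + 1) + 1) ^ (p - 2) * (t ^ 2 + s ^ 2))} := by
  refine ⟨32, ?_⟩
  rintro r ⟨s, t, hst, rfl⟩
  rw [div_le_iff₀ (denom_pos p s t hst)]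
  have := keyIneq p s t hp1 hp2
  linarith

lemma ratio_le_c3 (p s t : ℝ) (hp1 : 1 < p) (hp2 : p < 2) (hst : 0 < s ^ 2 + t ^ 2) :
    ((t ^ 2 + s ^ 2 + 2 * s + 1) ^ (p / 2) - 1 - p * s) ≤
      c3 p * ((Real.sqrt (t ^ 2 + s ^ 2 + 2 * s + 1) + 1) ^ (p - 2) * (t ^ 2 + s ^ 2)) := by
  have hmem : ((t ^ 2 + s ^ 2 + 2 * s + 1) ^ (p / 2) - 1 - p * s) /
      ((Real.sqrt (t ^ 2 + s ^ 2 + 2 * s + 1) + 1) ^ (p - 2) * (t ^ 2 + s ^ 2)) ∈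
      {r : ℝ | ∃ s t : ℝ, 0 < s ^ 2 + t ^ 2 ∧
      r = ((t ^ 2 + s ^ 2 + 2 * s + 1) ^ (p / 2) - 1 - p * s) /
        ((Real.sqrt (t ^ 2 + s ^ 2 + 2 * s + 1) + 1) ^ (p - 2) * (t ^ 2 + s ^ 2))} :=
    ⟨s, t, hst, rfl⟩
  have hle := le_csSup (c3_bdd p hp1 hp2) hmem
  rw [div_le_iff₀ (denom_pos p s t hst)] at hle
  calc (t ^ 2 + s ^ 2 + 2 * s + 1) ^ (p / 2) - 1 - p * s
      ≤ c3 p * ((Real.sqrt (t ^ 2 + s ^ 2 + 2 * s + 1) + 1) ^ (p - 2) * (t ^ 2 + s ^ 2)) := hle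

lemma c3_ge (p : ℝ) (hp1 : 1 < p) (hp2 : p < 2) : p / 2 ^ (p - 1) ≤ c3 p := by
  set g : ℝ → ℝ := fun t =>
    (((t ^ 2 + 1) ^ (p / 2) - 1) / t ^ 2) * (((Real.sqrt (t ^ 2 + 1) + 1) ^ (p - 2))⁻¹)
    with hgdef
  -- the first factor tends to p/2
  have hF : HasDerivAt (fun u : ℝ => (1 + u) ^ (p / 2)) (p / 2) 0 := by
    have h2 : HasDerivAt (fun u : ℝ => 1 + u) 1 0 := by
      simpa using (hasDerivAt_id (0:ℝ)).const_add 1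
    have h3 := h2.rpow_const (p := p / 2) (Or.inl (by norm_num))
    simpa [Real.one_rpow] using h3
  have hslope : Tendsto (fun u : ℝ => ((1 + u) ^ (p / 2) - 1) / u) (𝓝[≠] 0) (𝓝 (p / 2)) := by
    have := hasDerivAt_iff_tendsto_slope.mp hF
    refine this.congr' ?_
    filter_upwards [self_mem_nhdsWithin] with u hu
    simp [slope_def_field]
  have hsq : Tendsto (fun t : ℝ => t ^ 2) (𝓝[>] 0) (𝓝[≠] 0) := by
    apply tendsto_nhdsWithin_of_tendsto_nhds_of_eventually_within
    · have : Tendsto (fun t : ℝ => t ^ 2) (𝓝 0) (𝓝 0) := by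
        simpa using (continuous_pow 2).tendsto (0:ℝ)
      exact this.mono_left nhdsWithin_le_nhds
    · filter_upwards [self_mem_nhdsWithin] with t ht
      exact pow_ne_zero 2 (ne_of_gt ht)
  have hphi : Tendsto (fun t : ℝ => ((t ^ 2 + 1) ^ (p / 2) - 1) / t ^ 2) (𝓝[>] 0)
      (𝓝 (p / 2)) := by
    have := hslope.comp hsq
    refine this.congr ?_
    intro t
    simp [Function.comp, add_comm]
  -- the second factor tends to (2^(p-2))⁻¹
  have h2pos : (0:ℝ) < (2:ℝ) ^ (p - 2) := Real.rpow_pos_of_pos two_pos _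
  have hpsi : Tendsto (fun t : ℝ => ((Real.sqrt (t ^ 2 + 1) + 1) ^ (p - 2))⁻¹) (𝓝[>] 0)
      (𝓝 (((2:ℝ) ^ (p - 2))⁻¹)) := by
    have hcont : ContinuousAt (fun t : ℝ => ((Real.sqrt (t ^ 2 + 1) + 1) ^ (p - 2))⁻¹) 0 := by
      have hbase : ContinuousAt (fun t : ℝ => Real.sqrt (t ^ 2 + 1) + 1) 0 := by
        fun_prop
      have hb0 : Real.sqrt ((0:ℝ) ^ 2 + 1) + 1 = 2 := by norm_num
      have hrp : ContinuousAt (fun t : ℝ => (Real.sqrt (t ^ 2 + 1) + 1) ^ (p - 2)) 0 := by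
        apply ContinuousAt.rpow_const hbase
        left
        norm_num
      exact hrp.inv₀ (by rw [hb0]; exact ne_of_gt h2pos)
    have := hcont.tendsto.mono_left (nhdsWithin_le_nhds (s := Set.Ioi (0:ℝ)))
    simpa [one_add_one_eq_two] using this
  have hg : Tendsto g (𝓝[>] 0) (𝓝 (p / 2 * ((2:ℝ) ^ (p - 2))⁻¹)) := hphi.mul hpsi
  have hval : p / 2 ^ (p - 1) = p / 2 * ((2:ℝ) ^ (p - 2))⁻¹ := by
    have h21 : (2:ℝ) ^ (p - 1) = 2 * (2:ℝ) ^ (p - 2) := by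
      rw [show p - 1 = 1 + (p - 2) by ring, Real.rpow_add two_pos, Real.rpow_one]
    rw [h21]
    field_simp
  rw [hval]
  refine le_of_tendsto hg ?_
  filter_upwards [self_mem_nhdsWithin] with t ht
  have htpos : (0:ℝ) < t := ht
  have hmem : g t ∈ {r : ℝ | ∃ s t : ℝ, 0 < s ^ 2 + t ^ 2 ∧
      r = ((t ^ 2 + s ^ 2 + 2 * s + 1) ^ (p / 2) - 1 - p * s) /
        ((Real.sqrt (t ^ 2 + s ^ 2 + 2 * s + 1) + 1) ^ (p - 2) * (t ^ 2 + s ^ 2))} := by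
    refine ⟨0, t, by positivity, ?_⟩
    rw [hgdef]
    norm_num
    ring
  exact le_csSup (c3_bdd p hp1 hp2) hmem

/-- For `1 < p < 2` and `ℓ ≥ 2`, for all `ξ, η ∈ ℂ^ℓ` with `|ξ| + |ξ−η| > 0`,
`C_p(ξ,η) ≤ c₃(p)|η|²/(|ξ|+|ξ−η|)^{2−p}`, and `c₃(p) ∈ [p/2^{p−1}, ∞)`. -/
theorem Cp_upper_bound_c3 (p : ℝ) (hp1 : 1 < p) (hp2 : p < 2) (ℓ : ℕ) (hℓ : 2 ≤ ℓ) :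
    (∀ ξ η : EuclideanSpace ℂ (Fin ℓ), 0 < ‖ξ‖ + ‖ξ - η‖ →
      Cp p ξ η ≤ c3 p * ‖η‖ ^ 2 / (‖ξ‖ + ‖ξ - η‖) ^ (2 - p)) ∧
      c3 p ∈ Set.Ici (p / 2 ^ (p - 1)) := by
  have hp0 : 0 < p := lt_trans zero_lt_one hp1
  have h2pow : (0:ℝ) < 2 ^ (p - 1) := Real.rpow_pos_of_pos two_pos _
  -- 2^(p-1) ≤ p via convexity of exp
  have h2p : (2:ℝ) ^ (p - 1) ≤ p := by
    have hc := convexOn_exp.2 (Set.mem_univ (0:ℝ)) (Set.mem_univ (Real.log 2))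
      (by linarith : (0:ℝ) ≤ 2 - p) (by linarith : (0:ℝ) ≤ p - 1) (by ring)
    simp only [smul_eq_mul, mul_zero, zero_add, Real.exp_zero] at hc
    rw [Real.exp_log two_pos] at hc
    have h2e : (2:ℝ) ^ (p - 1) = Real.exp ((p - 1) * Real.log 2) := by
      rw [Real.rpow_def_of_pos two_pos, mul_comm]
    rw [h2e]
    linarith
  have hc3_1 : 1 ≤ c3 p := le_trans ((one_le_div h2pow).mpr h2p) (c3_ge p hp1 hp2)
  refine ⟨?_, le_trans (le_refl _) (c3_ge p hp1 hp2)⟩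
  intro ξ η hpos
  by_cases hζ : ξ - η = 0
  · -- ξ = η
    have hxieq : ‖η‖ = ‖ξ‖ := by rw [sub_eq_zero.mp hζ]
    rw [hζ, norm_zero, add_zero] at hpos
    simp only [Cp, hζ, norm_zero, inner_zero_left, Complex.zero_re, mul_zero, sub_zero,
      add_zero]
    rw [Real.zero_rpow (ne_of_gt hp0), sub_zero, hxieq]
    have hn0 : 0 < ‖ξ‖ := hpos
    have hnp : ‖ξ‖ ^ p = ‖ξ‖ ^ (2:ℕ) / ‖ξ‖ ^ (2 - p) := by
      rw [← Real.rpow_natCast ‖ξ‖ 2, ← Real.rpow_sub hn0]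
      norm_num
    rw [mul_div_assoc, ← hnp]
    nlinarith [Real.rpow_pos_of_pos hn0 p]
  · -- ξ ≠ η
    have ha : (0:ℝ) < ‖ξ - η‖ := norm_pos_iff.mpr hζ
    by_cases hη : η = 0
    · subst hη
      simp only [Cp, sub_zero, inner_zero_right, Complex.zero_re, mul_zero, norm_zero]
      have : c3 p * (0:ℝ) ^ 2 / (‖ξ‖ + ‖ξ‖) ^ (2 - p) = 0 := by norm_num
      rw [this]
      simp
    · -- main case
      set a := ‖ξ - η‖ with hadef
      set R := (inner ℂ (ξ - η) η : ℂ).re with hRdef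
      set s := R / a ^ 2 with hsdef
      set t := Real.sqrt (‖η‖ ^ 2 / a ^ 2 - s ^ 2) with htdef
      have ha2 : (0:ℝ) < a ^ 2 := by positivity
      have hRabs : |R| ≤ a * ‖η‖ := by
        calc |R| ≤ ‖(inner ℂ (ξ - η) η : ℂ)‖ := by
              rw [hRdef]; exact Complex.abs_re_le_norm _
          _ = ‖(inner ℂ (ξ - η) η : ℂ)‖ := rfl
          _ ≤ ‖ξ - η‖ * ‖η‖ := norm_inner_le_norm _ _
      have hR2 : R ^ 2 ≤ a ^ 2 * ‖η‖ ^ 2 := by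
        have h1 := mul_self_le_mul_self (abs_nonneg R) hRabs
        rw [abs_mul_abs_self] at h1
        nlinarith
      have hs2 : s ^ 2 ≤ ‖η‖ ^ 2 / a ^ 2 := by
        rw [hsdef, div_pow, div_le_div_iff₀ (by positivity) ha2]
        nlinarith [mul_le_mul_of_nonneg_right hR2 (sq_nonneg a)]
      have ht2 : t ^ 2 = ‖η‖ ^ 2 / a ^ 2 - s ^ 2 :=
        Real.sq_sqrt (by linarith)
      have hs' : s * a ^ 2 = R := by rw [hsdef]; field_simp
      have hst : (s ^ 2 + t ^ 2) * a ^ 2 = ‖η‖ ^ 2 := by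
        rw [ht2]; field_simp; ring
      have hnorm : ‖ξ‖ ^ 2 = a ^ 2 + 2 * R + ‖η‖ ^ 2 := by
        have h := norm_add_sq (𝕜 := ℂ) (ξ - η) η
        rw [sub_add_cancel] at h
        rw [hadef, hRdef]; exact h
      clear_value a R s t
      clear hsdef htdef hs2 ht2
      have hXsq : (t ^ 2 + s ^ 2 + 2 * s + 1) * a ^ 2 = ‖ξ‖ ^ 2 := by
        linear_combination hst + 2 * hs' - hnorm
      have hX0 : (0:ℝ) ≤ t ^ 2 + s ^ 2 + 2 * s + 1 := by
        nlinarith [sq_nonneg (‖ξ‖), ha2]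
      have hXdiv : t ^ 2 + s ^ 2 + 2 * s + 1 = (‖ξ‖ / a) ^ 2 := by
        rw [div_pow, eq_div_iff (ne_of_gt ha2)]
        exact hXsq
      
      have hAval : Real.sqrt (t ^ 2 + s ^ 2 + 2 * s + 1) = ‖ξ‖ / a := by
        rw [hXdiv]
        exact Real.sqrt_sq (by positivity)
      have hst0 : 0 < s ^ 2 + t ^ 2 := by
        have h0 : (0:ℝ) ≤ s ^ 2 + t ^ 2 := by positivity
        rcases eq_or_lt_of_le h0 with h | h
        · exfalso
          have : ‖η‖ ^ 2 = 0 := by rw [← hst, ← h]; ring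
          have : ‖η‖ = 0 := by nlinarith [norm_nonneg η]
          exact hη (norm_eq_zero.mp this)
        · exact h
      have hkey := ratio_le_c3 p s t hp1 hp2 hst0
      have hap : (0:ℝ) < a ^ p := Real.rpow_pos_of_pos ha _
      have hap2 : a ^ p = a ^ (p - 2) * a ^ (2:ℕ) := by
        rw [← Real.rpow_natCast a 2, ← Real.rpow_add ha]
        norm_num
      have hXp : (t ^ 2 + s ^ 2 + 2 * s + 1) ^ (p / 2) = ‖ξ‖ ^ p / a ^ p := by
        rw [Real.rpow_div_two_eq_sqrt p hX0, hAval, Real.div_rpow (norm_nonneg ξ) ha.le]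
      have hLHS : Cp p ξ η = a ^ p * ((t ^ 2 + s ^ 2 + 2 * s + 1) ^ (p / 2) - 1 - p * s) := by
        simp only [Cp, ← hadef, ← hRdef]
        have key1 : a ^ p * ((t ^ 2 + s ^ 2 + 2 * s + 1) ^ (p / 2)) = ‖ξ‖ ^ p := by
          rw [hXp, mul_comm, div_mul_cancel₀ _ (ne_of_gt hap)]
        have key2 : a ^ p * (p * s) = p * a ^ (p - 2) * R := by
          rw [hap2]
          linear_combination p * a ^ (p - 2) * hs'
        linear_combination key2 - key1
      set K := ‖ξ‖ / a + 1 with hKdef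
      have hK0 : (0:ℝ) < K := by
        rw [hKdef]; positivity
      have hKmul : a * K = ‖ξ‖ + a := by
        rw [hKdef]; field_simp
      have hD : (‖ξ‖ + a) ^ (2 - p) = a ^ (2 - p) * K ^ (2 - p) := by
        rw [← hKmul, Real.mul_rpow ha.le hK0.le]
      have hDpos : (0:ℝ) < (‖ξ‖ + a) ^ (2 - p) := Real.rpow_pos_of_pos hpos _
      have hKK : K ^ (p - 2) * K ^ (2 - p) = 1 := by
        rw [← Real.rpow_add hK0]; norm_num
      have haa : a ^ p * a ^ (2 - p) = a ^ (2:ℕ) := by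
        rw [← Real.rpow_natCast a 2, ← Real.rpow_add ha]; norm_num
      have hRHS : c3 p * ‖η‖ ^ 2 / (‖ξ‖ + a) ^ (2 - p)
          = a ^ p * (c3 p * (K ^ (p - 2) * (t ^ 2 + s ^ 2))) := by
        rw [eq_comm, eq_div_iff (ne_of_gt hDpos), hD]
        linear_combination (c3 p * (t ^ 2 + s ^ 2) * K ^ (p - 2) * K ^ (2 - p)) * haa +
          (c3 p * (t ^ 2 + s ^ 2) * a ^ (2:ℕ)) * hKK + c3 p * hst
      have hAK : Real.sqrt (t ^ 2 + s ^ 2 + 2 * s + 1) + 1 = K := by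
        rw [hAval, hKdef]
      rw [hAK] at hkey
      rw [hLHS, hRHS]
      exact mul_le_mul_of_nonneg_left hkey hap.le
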